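/- Let q ≥ 2 be an integer. The polynomial P(z) = z^{q+1} − z − 1 has a unique positive real root φ, and it satisfies 2^{1/(q+1)} < φ < 1 + 1/q. -/
import Mathlib

private lemma myMono (q : ℕ) (hq : 1 ≤ q) :
    StrictMonoOn (fun x : ℝ => x ^ (q + 1) - x - 1) (Set.Ici 1) := by
  intro a ha b hb hab
  simp only [Set.mem_Ici] at ha hb
  have h1 : a ^ (q + 1) - a = a * (a ^ q - 1) := by ring
  have h2 : b ^ (q + 1) - b = b * (b ^ q - 1) := by ring
  have hpa : a ^ q ≤ b ^ q := pow_le_pow_left₀ (by linarith) hab.le q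
  have hb1 : (1 : ℝ) < b := lt_of_le_of_lt ha hab
  have hbq : (1 : ℝ) < b ^ q := one_lt_pow₀ hb1 (by omega)
  have haq : (1 : ℝ) ≤ a ^ q := one_le_pow₀ ha
  have : a * (a ^ q - 1) < b * (b ^ q - 1) := by nlinarith
  simp only
  linarith

private lemma root_gt_one (q : ℕ) (x : ℝ) (hx : 0 < x)
    (hroot : x ^ (q + 1) - x - 1 = 0) : 1 < x := by
  by_contra h
  push_neg at h
  have : x ^ (q + 1) ≤ x := by
    calc x ^ (q + 1) ≤ x ^ 1 := pow_le_pow_of_le_one hx.le h (by omega)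
    _ = x := pow_one x
  linarith

theorem stmt_12 (q : ℕ) (hq : 2 ≤ q) :
    (∃! x : ℝ, 0 < x ∧ x ^ (q + 1) - x - 1 = 0) ∧
      ∀ φ : ℝ, 0 < φ → φ ^ (q + 1) - φ - 1 = 0 →
        (2 : ℝ) ^ ((1 : ℝ) / (q + 1)) < φ ∧ φ < 1 + 1 / (q : ℝ) := by
  have hq1 : 1 ≤ q := by omega
  set f : ℝ → ℝ := fun x => x ^ (q + 1) - x - 1 with hf
  have hcont : ContinuousOn f (Set.Icc 1 2) := by fun_prop
  have hf1 : f 1 = -1 := by simp [hf]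
  have hf2 : 0 ≤ f 2 := by
    have : (8 : ℝ) ≤ 2 ^ (q + 1) := by
      calc (8 : ℝ) = 2 ^ 3 := by norm_num
      _ ≤ 2 ^ (q + 1) := pow_le_pow_right₀ (by norm_num) (by omega)
    simp only [hf]; linarith
  obtain ⟨x, hxmem, hxroot⟩ : ∃ x ∈ Set.Icc (1 : ℝ) 2, f x = 0 :=
    intermediate_value_Icc (by norm_num) hcont ⟨by linarith [hf1], hf2⟩
  have hx1 : (1 : ℝ) ≤ x := hxmem.1
  have hxpos : (0 : ℝ) < x := by linarith
  refine ⟨⟨x, ⟨hxpos, hxroot⟩, ?_⟩, ?_⟩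
  · rintro y ⟨hypos, hyroot⟩
    have hy1 : 1 < y := root_gt_one q y hypos hyroot
    exact (myMono q hq1).injOn (Set.mem_Ici.mpr hy1.le) (Set.mem_Ici.mpr hx1)
      (by simp only [hf] at hyroot hxroot; rw [hyroot, hxroot])
  · intro φ hφpos hφroot
    have hφ1 : 1 < φ := root_gt_one q φ hφpos hφroot
    constructor
    · -- lower bound
      set c : ℝ := (2 : ℝ) ^ ((1 : ℝ) / (q + 1)) with hc
      have hcpow : c ^ (q + 1) = 2 := by
        rw [hc, ← Real.rpow_natCast ((2:ℝ) ^ ((1:ℝ)/(q+1))) (q + 1),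
          ← Real.rpow_mul (by norm_num)]
        have : (1 : ℝ) / (q + 1) * ((q : ℝ) + 1) = 1 := by
          field_simp
        push_cast
        rw [this, Real.rpow_one]
      have hφpow : φ ^ (q + 1) = φ + 1 := by linarith
      have : c ^ (q + 1) < φ ^ (q + 1) := by rw [hcpow, hφpow]; linarith
      exact lt_of_pow_lt_pow_left₀ (q + 1) hφpos.le this
    · -- upper bound
      have hq0 : (0 : ℝ) < q := by positivity
      set t : ℝ := 1 + 1 / (q : ℝ) with ht
      have hx0 : (0 : ℝ) < 1 / (q : ℝ) := by positivity
      have hbern : 1 + (q : ℝ) * (1 / q) ≤ (1 + 1 / (q : ℝ)) ^ q :=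
        one_add_mul_le_pow (by linarith) q
      have hqx : (q : ℝ) * (1 / q) = 1 := by field_simp
      have htq : (2 : ℝ) ≤ t ^ q := by rw [ht]; linarith [hbern, hqx.symm ▸ hbern]
      have htpos : (0 : ℝ) < t := by rw [ht]; linarith
      clear_value t
      have hft : 0 < f t := by
        have he1 : t ^ (q + 1) = t * t ^ q := by ring
        simp only [hf]
        have h2 : t * t ^ q ≥ t * 2 := by nlinarith
        have he2 : t * 2 = 2 + 2 / q := by rw [ht]; ring
        have he3 : t - 1 = 1/(q:ℝ) := by rw [ht]; ring
        have he4 : 2/(q:ℝ) = 2*(1/(q:ℝ)) := by ring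
        nlinarith [htq, hx0, he4]
      by_contra h
      push_neg at h
      rcases eq_or_lt_of_le h with heq | hlt
      · rw [heq] at hft; have h8 : 0 < φ ^ (q + 1) - φ - 1 := hft; linarith
      · have := (myMono q hq1) (Set.mem_Ici.mpr (by rw [ht]; linarith : (1:ℝ) ≤ t))
          (Set.mem_Ici.mpr hφ1.le) hlt
        have h6 : t ^ (q + 1) - t - 1 < φ ^ (q + 1) - φ - 1 := this
        have h7 : 0 < t ^ (q + 1) - t - 1 := hft
        linarith
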